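/- arXiv:2011.00314 — 6 statements merged into one kernel-verified Lean document; each statement's English description precedes it below -/
import Mathlib

section
/- For a Möbius transformation m(z) = (az+b)/(cz+d) with coefficients in K normalized so that max(|a|,|b|,|c|,|d|) = 1 and ad - bc ≠ 0, the action on (P^1(K), chordal metric) is quasi-isometric: for all z, w ∈ P^1(K), |ad-bc|·[z,w] ≤ [m(z), m(w)] ≤ |ad-bc|^{-1}·[z,w]. -/
/-- The chordal metric on homogeneous representatives. -/
noncomputable def chord {K : Type*} [Field K] (v : AbsoluteValue K ℝ)
    (p q : K × K) : ℝ :=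
  v (p.1 * q.2 - p.2 * q.1) / (max (v p.1) (v p.2) * max (v q.1) (v q.2))

lemma moebius_apply_le {K : Type*} [Field K] (v : AbsoluteValue K ℝ)
    (hv : IsNonarchimedean (v : K → ℝ)) {a b c d : K}
    (ha : v a ≤ 1) (hb : v b ≤ 1) (hc : v c ≤ 1) (hd : v d ≤ 1) (x y : K) :
    max (v (a * x + b * y)) (v (c * x + d * y)) ≤ max (v x) (v y) := by
  have key : ∀ e f : K, v e ≤ 1 → v f ≤ 1 → v (e * x + f * y) ≤ max (v x) (v y) := by
    intro e f he hf
    refine (hv _ _).trans (max_le ?_ ?_)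
    · rw [map_mul]
      exact le_max_of_le_left (mul_le_of_le_one_left (v.nonneg x) he)
    · rw [map_mul]
      exact le_max_of_le_right (mul_le_of_le_one_left (v.nonneg y) hf)
  exact max_le (key a b ha hb) (key c d hc hd)

/-- A Möbius transformation `m(z) = (az+b)/(cz+d)` with
`max (|a|,|b|,|c|,|d|) = 1` and `ad - bc ≠ 0`, acting on `P¹(K)` by
`[z₀:z₁] ↦ [a z₀ + b z₁ : c z₀ + d z₁]`, is quasi-isometric for the chordal
metric: `|ad-bc|·[z,w] ≤ [m z, m w] ≤ |ad-bc|⁻¹·[z,w]`. -/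
theorem moebius_quasi_isometry {K : Type*} [Field K] (v : AbsoluteValue K ℝ)
    (hv : IsNonarchimedean (v : K → ℝ)) (a b c d : K)
    (hnorm : max (max (v a) (v b)) (max (v c) (v d)) = 1)
    (hdet : a * d - b * c ≠ 0) (p q : K × K) (hp : p ≠ 0) (hq : q ≠ 0) :
    v (a * d - b * c) * chord v p q ≤
        chord v (a * p.1 + b * p.2, c * p.1 + d * p.2)
          (a * q.1 + b * q.2, c * q.1 + d * q.2) ∧
      chord v (a * p.1 + b * p.2, c * p.1 + d * p.2)
          (a * q.1 + b * q.2, c * q.1 + d * q.2) ≤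
        (v (a * d - b * c))⁻¹ * chord v p q := by
  have ha : v a ≤ 1 := hnorm ▸ le_max_of_le_left (le_max_left _ _)
  have hb : v b ≤ 1 := hnorm ▸ le_max_of_le_left (le_max_right _ _)
  have hc : v c ≤ 1 := hnorm ▸ le_max_of_le_right (le_max_left _ _)
  have hd : v d ≤ 1 := hnorm ▸ le_max_of_le_right (le_max_right _ _)
  have hnb : v (-b) ≤ 1 := by rwa [v.map_neg]
  have hnc : v (-c) ≤ 1 := by rwa [v.map_neg]
  set vd := v (a * d - b * c) with hvd
  have vdpos : 0 < vd := v.pos hdet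
  -- positivity of the original norms
  have normpos : ∀ r : K × K, r ≠ 0 → 0 < max (v r.1) (v r.2) := by
    intro r hr
    have : r.1 ≠ 0 ∨ r.2 ≠ 0 := by
      by_contra h
      push_neg at h
      exact hr (Prod.ext h.1 h.2)
    rcases this with h | h
    · exact lt_max_of_lt_left (v.pos h)
    · exact lt_max_of_lt_right (v.pos h)
  set Dp := max (v p.1) (v p.2) with hDpdef
  set Dq := max (v q.1) (v q.2) with hDqdef
  have hDp : 0 < Dp := normpos p hp
  have hDq : 0 < Dq := normpos q hq
  -- image norms
  set Mp := max (v (a * p.1 + b * p.2)) (v (c * p.1 + d * p.2)) with hMpdef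
  set Mq := max (v (a * q.1 + b * q.2)) (v (c * q.1 + d * q.2)) with hMqdef
  have hMp_le : Mp ≤ Dp := moebius_apply_le v hv ha hb hc hd p.1 p.2
  have hMq_le : Mq ≤ Dq := moebius_apply_le v hv ha hb hc hd q.1 q.2
  -- lower bound for image norms via the inverse matrix
  have inv_bound : ∀ x y : K, vd * max (v x) (v y) ≤
      max (v (a * x + b * y)) (v (c * x + d * y)) := by
    intro x y
    have h := moebius_apply_le v hv hd hnb hnc ha (a * x + b * y) (c * x + d * y)
    have e1 : d * (a * x + b * y) + -b * (c * x + d * y) = (a * d - b * c) * x := by ring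
    have e2 : -c * (a * x + b * y) + a * (c * x + d * y) = (a * d - b * c) * y := by ring
    rw [e1, e2, map_mul, map_mul, ← hvd] at h
    rcases max_cases (v x) (v y) with ⟨h1, _⟩ | ⟨h1, _⟩ <;> rw [h1]
    · exact le_trans (le_max_left _ _) h
    · exact le_trans (le_max_right _ _) h
  have hMp_ge : vd * Dp ≤ Mp := inv_bound p.1 p.2
  have hMq_ge : vd * Dq ≤ Mq := inv_bound q.1 q.2
  have hMp : 0 < Mp := lt_of_lt_of_le (mul_pos vdpos hDp) hMp_ge
  have hMq : 0 < Mq := lt_of_lt_of_le (mul_pos vdpos hDq) hMq_ge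
  -- numerator identity
  have hnum : (a * p.1 + b * p.2) * (c * q.1 + d * q.2)
      - (c * p.1 + d * p.2) * (a * q.1 + b * q.2)
      = (a * d - b * c) * (p.1 * q.2 - p.2 * q.1) := by ring
  set N := v (p.1 * q.2 - p.2 * q.1) with hN
  have hN0 : 0 ≤ N := v.nonneg _
  have hchord1 : chord v p q = N / (Dp * Dq) := rfl
  have hchord2 : chord v (a * p.1 + b * p.2, c * p.1 + d * p.2)
      (a * q.1 + b * q.2, c * q.1 + d * q.2) = vd * N / (Mp * Mq) := by
    simp only [chord, hnum, map_mul, ← hvd, ← hN, hMpdef, hMqdef]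
  rw [hchord1, hchord2]
  have hDD : Mp * Mq ≤ Dp * Dq :=
    mul_le_mul hMp_le hMq_le (le_of_lt hMq) (le_of_lt hDp)
  have hMM : (vd * Dp) * (vd * Dq) ≤ Mp * Mq :=
    mul_le_mul hMp_ge hMq_ge (by positivity) (le_of_lt hMp)
  constructor
  · rw [mul_div_assoc']
    gcongr
  · rw [mul_div_assoc', div_le_div_iff₀ (by positivity) (by positivity)]
    calc vd * N * (Dp * Dq) = vd⁻¹ * N * (vd * Dp * (vd * Dq)) := by
          field_simp
      _ ≤ vd⁻¹ * N * (Mp * Mq) :=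
          mul_le_mul_of_nonneg_left hMM (by positivity)
end

section
/- The transfinite diameter of the closed disk B(a,r) in an algebraically closed non-archimedean field K with |K*| dense in ℝ>0 equals r. -/
open Filter

/-- The `n`-th diameter `d_n(E)`. -/
noncomputable def dSeq {K : Type*} [NormedField K] (E : Set K) (n : ℕ) : ℝ :=
  sSup {x : ℝ | ∃ z : Fin n → K, (∀ i, z i ∈ E) ∧
    x = (∏ i, ∏ j ∈ Finset.univ.erase i, ‖z i - z j‖) ^
        ((1 : ℝ) / ((n : ℝ) * ((n : ℝ) - 1)))}


section Aux

variable {K : Type*} [NontriviallyNormedField K] [IsAlgClosed K]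

/-- Density of the value group: norms are dense in positive reals. -/
lemma aux_exists_norm_between (s r : ℝ) (hs : 0 ≤ s) (hsr : s < r) :
    ∃ y : K, s < ‖y‖ ∧ ‖y‖ ≤ r := by
  obtain ⟨b, hb⟩ := NormedField.exists_one_lt_norm K
  rcases eq_or_lt_of_le hs with h0 | hspos
  · -- s = 0 : find a nonzero element of small norm
    obtain ⟨N, hN⟩ := pow_unbounded_of_one_lt (r⁻¹) hb
    have hbN : (0:ℝ) < ‖b‖ ^ N := pow_pos (lt_trans one_pos hb) N
    refine ⟨(b ^ N)⁻¹, ?_, ?_⟩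
    · rw [norm_inv, norm_pow, ← h0]
      positivity
    · rw [norm_inv, norm_pow]
      exact le_of_lt (inv_lt_of_inv_lt₀ (hs.trans_lt hsr) hN)
  · -- s > 0
    have hrs : 1 < r / s := (one_lt_div hspos).2 hsr
    obtain ⟨k, hk⟩ := pow_unbounded_of_one_lt ‖b‖ hrs
    have hk0 : 0 < k := by
      rcases Nat.eq_zero_or_pos k with h | h
      · exfalso; rw [h, pow_zero] at hk; exact absurd hk (not_lt.2 hb.le)
      · exact h
    obtain ⟨c, hc⟩ := IsAlgClosed.exists_pow_nat_eq b hk0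
    set u := ‖c‖ with hu
    have huk : u ^ k = ‖b‖ := by rw [hu, ← norm_pow, hc]
    have hu1 : 1 < u := by
      by_contra h
      push_neg at h
      have : u ^ k ≤ 1 := pow_le_one₀ (norm_nonneg c) h
      rw [huk] at this; exact absurd hb (not_lt.2 this)
    have hurs : u < r / s := by
      by_contra h
      push_neg at h
      have : (r / s) ^ k ≤ u ^ k :=
        pow_le_pow_left₀ (le_of_lt (lt_trans one_pos hrs)) h k
      rw [huk] at this
      exact absurd hk (not_lt.2 this)
    obtain ⟨n, hn1, hn2⟩ := exists_mem_Ioc_zpow (hs.trans_lt hsr) hu1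
    have hc0 : c ≠ 0 := by
      intro h; simp only [hu, h, norm_zero] at hu1; linarith
    refine ⟨c ^ n, ?_, ?_⟩
    · -- s < ‖c ^ n‖ = u ^ n
      rw [norm_zpow, ← hu]
      have hup : (0:ℝ) < u := lt_trans one_pos hu1
      have h1 : s * u < r := by
        calc s * u < s * (r / s) := by
              exact mul_lt_mul_of_pos_left hurs hspos
          _ = r := by field_simp
      have h2 : r ≤ u ^ n * u := by
        rw [← zpow_add_one₀ (ne_of_gt hup)]
        exact hn2
      have := lt_of_lt_of_le h1 h2
      exact lt_of_mul_lt_mul_right this hup.le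
    · rw [norm_zpow, ← hu]; exact hn1.le

end Aux

section Aux2

variable {K : Type*} [NontriviallyNormedField K]

/-- There exist arbitrarily large naturals whose image in `K` has norm one. -/
lemma aux_exists_nat_norm_one (hna : IsNonarchimedean (norm : K → ℝ)) (n : ℕ) :
    ∃ m : ℕ, n ≤ m ∧ ‖(m : K)‖ = 1 := by
  haveI : IsUltrametricDist K :=
    IsUltrametricDist.isUltrametricDist_of_isNonarchimedean_norm hna
  have h2 : ‖((2:ℕ) : K)‖ ≤ 1 := IsUltrametricDist.norm_natCast_le_one K 2
  have h3 : ‖((3:ℕ) : K)‖ ≤ 1 := IsUltrametricDist.norm_natCast_le_one K 3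
  have key : ‖((2:ℕ) : K)‖ = 1 ∨ ‖((3:ℕ) : K)‖ = 1 := by
    by_contra h
    push_neg at h
    obtain ⟨h2', h3'⟩ := h
    have h2lt : ‖((2:ℕ) : K)‖ < 1 := lt_of_le_of_ne h2 h2'
    have h3lt : ‖((3:ℕ) : K)‖ < 1 := lt_of_le_of_ne h3 h3'
    have : ((1:K)) = ((3:ℕ):K) + (-((2:ℕ):K)) := by push_cast; ring
    have hb := hna ((3:ℕ):K) (-((2:ℕ):K))
    rw [← this, norm_one, norm_neg] at hb
    rcases max_cases ‖((3:ℕ):K)‖ ‖((2:ℕ):K)‖ with ⟨he,_⟩|⟨he,_⟩ <;> rw [he] at hb <;> linarith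
  obtain hp | hp := key
  · refine ⟨2 ^ n, le_of_lt (Nat.lt_two_pow_self (n := n)), ?_⟩
    push_cast
    rw [norm_pow]
    rw [show ((2:ℕ):K) = (2:K) by push_cast; ring] at hp
    rw [hp, one_pow]
  · refine ⟨3 ^ n, le_of_lt (lt_of_lt_of_le (Nat.lt_two_pow_self (n := n))
      (Nat.pow_le_pow_left (by norm_num) n)), ?_⟩
    push_cast
    rw [norm_pow]
    rw [show ((3:ℕ):K) = (3:K) by push_cast; ring] at hp
    rw [hp, one_pow]

/-- If `θ` is an `m`-th root of unity different from `1` and `‖m‖ = 1`,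
then `‖1 - θ‖ = 1`. -/
lemma aux_norm_one_sub_root (hna : IsNonarchimedean (norm : K → ℝ))
    {m : ℕ} (hm : ‖((m:ℕ) : K)‖ = 1) {θ : K} (hθm : θ ^ m = 1) (hθ : θ ≠ 1) :
    ‖1 - θ‖ = 1 := by
  haveI : IsUltrametricDist K :=
    IsUltrametricDist.isUltrametricDist_of_isNonarchimedean_norm hna
  have hθnorm : ‖θ‖ = 1 := by
    have h1 : ‖θ‖ ^ m = 1 := by rw [← norm_pow, hθm, norm_one]
    by_contra h
    rcases lt_or_gt_of_ne h with hlt | hgt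
    · have hm0 : m ≠ 0 := by
        intro h0; rw [h0] at hm; simp at hm
      have := pow_lt_one₀ (norm_nonneg θ) hlt hm0
      rw [h1] at this; exact lt_irrefl _ this
    · have hm0 : m ≠ 0 := by
        intro h0; rw [h0] at hm; simp at hm
      have := one_lt_pow₀ hgt hm0
      rw [h1] at this; exact lt_irrefl _ this
  have upper : ‖1 - θ‖ ≤ 1 := by
    have := hna 1 (-θ)
    rw [← sub_eq_add_neg, norm_neg, norm_one, hθnorm, max_self] at this
    exact this
  have geom : ∑ k ∈ Finset.range m, θ ^ k = 0 := by
    have h := geom_sum_mul θ m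
    rw [hθm, sub_self] at h
    rcases mul_eq_zero.mp h with h | h
    · exact h
    · exact absurd (sub_eq_zero.mp h) hθ
  have key : ((m:ℕ) : K) = ∑ k ∈ Finset.range m, (1 - θ ^ k) := by
    rw [Finset.sum_sub_distrib, geom, sub_zero, Finset.sum_const, Finset.card_range,
      nsmul_eq_mul, mul_one]
  have bound : ∀ k ∈ Finset.range m, ‖1 - θ ^ k‖ ≤ ‖1 - θ‖ := by
    intro k _
    have hfac : 1 - θ ^ k = (1 - θ) * ∑ j ∈ Finset.range k, θ ^ j := by
      linear_combination geom_sum_mul θ k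
    rw [hfac, norm_mul]
    have hs : ‖∑ j ∈ Finset.range k, θ ^ j‖ ≤ 1 := by
      apply IsUltrametricDist.norm_sum_le_of_forall_le_of_nonneg zero_le_one
      intro j _
      rw [norm_pow, hθnorm, one_pow]
    calc ‖1 - θ‖ * ‖∑ j ∈ Finset.range k, θ ^ j‖
        ≤ ‖1 - θ‖ * 1 := mul_le_mul_of_nonneg_left hs (norm_nonneg _)
      _ = ‖1 - θ‖ := mul_one _
  have lower : 1 ≤ ‖1 - θ‖ := by
    rw [← hm, key]
    exact IsUltrametricDist.norm_sum_le_of_forall_le_of_nonneg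
      ((norm_nonneg (1 - θ))) bound
  exact le_antisymm upper lower

end Aux2

section Aux3

lemma aux_rpow (t : ℝ) (ht : 0 ≤ t) {n : ℕ} (hn : 2 ≤ n) :
    ((t ^ (n-1)) ^ n) ^ ((1:ℝ)/((n:ℝ)*((n:ℝ)-1))) = t := by
  have hn1 : (1:ℕ) ≤ n := le_trans one_le_two hn
  have hnR : (2:ℝ) ≤ (n:ℝ) := by exact_mod_cast hn
  have h1 : ((t ^ (n-1)) ^ n : ℝ) = t ^ ((n-1)*n : ℕ) := by rw [← pow_mul]
  have hexp : ((((n-1)*n : ℕ)) : ℝ) * ((1:ℝ)/((n:ℝ)*((n:ℝ)-1))) = 1 := by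
    have hne : (n:ℝ) ≠ 0 := by linarith
    have hne1 : (n:ℝ) - 1 ≠ 0 := by linarith
    push_cast [Nat.cast_sub hn1]
    field_simp
  rw [h1, ← Real.rpow_natCast t ((n-1)*n), ← Real.rpow_mul ht, hexp, Real.rpow_one]

end Aux3

section Main

variable {K : Type*} [NontriviallyNormedField K] [IsAlgClosed K]

omit [IsAlgClosed K] in
lemma aux_norm_eq_one_of_pow {x : K} {m : ℕ} (hm : m ≠ 0) (hx : x ^ m = 1) :
    ‖x‖ = 1 := by
  have h1 : ‖x‖ ^ m = 1 := by rw [← norm_pow, hx, norm_one]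
  by_contra h
  rcases lt_or_gt_of_ne h with hlt | hgt
  · have := pow_lt_one₀ (norm_nonneg x) hlt hm
    rw [h1] at this; exact lt_irrefl _ this
  · have := one_lt_pow₀ hgt hm
    rw [h1] at this; exact lt_irrefl _ this

lemma dSeq_disk_eq (hna : IsNonarchimedean (norm : K → ℝ))
    (a : K) (r : ℝ) (hr : 0 < r) {n : ℕ} (hn : 2 ≤ n) :
    dSeq {z : K | ‖z - a‖ ≤ r} n = r := by
  have hnR : (2:ℝ) ≤ (n:ℝ) := by exact_mod_cast hn
  have hepos : 0 ≤ (1:ℝ)/((n:ℝ)*((n:ℝ)-1)) := by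
    have : (0:ℝ) < (n:ℝ)*((n:ℝ)-1) := by nlinarith
    positivity
  set S := {x : ℝ | ∃ z : Fin n → K, (∀ i, z i ∈ {z : K | ‖z - a‖ ≤ r}) ∧
    x = (∏ i, ∏ j ∈ Finset.univ.erase i, ‖z i - z j‖) ^
        ((1 : ℝ) / ((n : ℝ) * ((n : ℝ) - 1)))} with hS
  -- upper bound
  have hub : ∀ x ∈ S, x ≤ r := by
    rintro x ⟨z, hz, rfl⟩
    have hP : ∏ i, ∏ j ∈ Finset.univ.erase i, ‖z i - z j‖ ≤ (r ^ (n-1)) ^ n := by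
      calc ∏ i, ∏ j ∈ Finset.univ.erase i, ‖z i - z j‖
          ≤ ∏ _i : Fin n, r ^ (n-1) := by
            apply Finset.prod_le_prod
            · intro i _; exact Finset.prod_nonneg fun j _ => norm_nonneg _
            · intro i _
              calc ∏ j ∈ Finset.univ.erase i, ‖z i - z j‖
                  ≤ ∏ _j ∈ Finset.univ.erase i, r := by
                    apply Finset.prod_le_prod
                    · intro j _; exact norm_nonneg _
                    · intro j _
                      have h1 : z i - z j = (z i - a) + (-(z j - a)) := by ring
                      have h2 := hna (z i - a) (-(z j - a))
                      rw [← h1, norm_neg] at h2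
                      exact h2.trans (max_le (hz i) (hz j))
                _ = r ^ (n-1) := by
                    rw [Finset.prod_const, Finset.card_erase_of_mem (Finset.mem_univ i),
                      Finset.card_univ, Fintype.card_fin]
        _ = (r ^ (n-1)) ^ n := by
            rw [Finset.prod_const, Finset.card_univ, Fintype.card_fin]
    calc (∏ i, ∏ j ∈ Finset.univ.erase i, ‖z i - z j‖) ^
        ((1 : ℝ) / ((n : ℝ) * ((n : ℝ) - 1)))
        ≤ ((r ^ (n-1)) ^ n) ^ ((1 : ℝ) / ((n : ℝ) * ((n : ℝ) - 1))) :=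
          Real.rpow_le_rpow
            (Finset.prod_nonneg fun i _ => Finset.prod_nonneg fun j _ => norm_nonneg _)
            hP hepos
      _ = r := aux_rpow r hr.le hn
  -- for every s < r there is an element of S exceeding s
  have hlt : ∀ s : ℝ, 0 ≤ s → s < r → ∃ x ∈ S, s < x := by
    intro s hs hsr
    obtain ⟨y, hys, hyr⟩ := aux_exists_norm_between (K := K) s r hs hsr
    obtain ⟨m, hnm, hm1⟩ := aux_exists_nat_norm_one hna n
    have hm0 : 0 < m := lt_of_lt_of_le (by omega) hnm
    haveI : NeZero ((m : ℕ) : K) := ⟨fun h => by rw [h, norm_zero] at hm1; linarith⟩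
    set m' : ℕ+ := ⟨m, hm0⟩ with hm'
    have hcyc := IsSepClosed.isCyclotomicExtension ({m} : Set ℕ) K
      (fun b hb _ => by
        rw [Set.mem_singleton_iff] at hb; rw [hb]; exact ‹NeZero ((m : ℕ) : K)›)
    obtain ⟨ζ, hζ0⟩ := IsCyclotomicExtension.exists_isPrimitiveRoot K K (Set.mem_singleton m) (by omega)
    have hζ : IsPrimitiveRoot ζ m := hζ0
    have hζm : ζ ^ m = 1 := hζ.pow_eq_one
    have hζnorm : ‖ζ‖ = 1 := aux_norm_eq_one_of_pow (by omega) hζm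
    have hdiff : ∀ k l : ℕ, k < l → l < m → ‖ζ ^ k - ζ ^ l‖ = 1 := by
      intro k l hkl hlm
      have h1 : ζ ^ k - ζ ^ l = ζ ^ k * (1 - ζ ^ (l - k)) := by
        rw [mul_sub, mul_one, ← pow_add]
        congr 2
        omega
      rw [h1, norm_mul, norm_pow, hζnorm, one_pow, one_mul]
      apply aux_norm_one_sub_root hna hm1
      · rw [← pow_mul, mul_comm, pow_mul, hζm, one_pow]
      · exact hζ.pow_ne_one_of_pos_of_lt (by omega) (by omega)
    set z : Fin n → K := fun i => a + y * ζ ^ (i : ℕ) with hzdef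
    have hzz : ∀ i j : Fin n, i ≠ j → ‖z i - z j‖ = ‖y‖ := by
      intro i j hij
      have h1 : z i - z j = y * (ζ ^ (i:ℕ) - ζ ^ (j:ℕ)) := by
        simp only [hzdef]; ring
      rw [h1, norm_mul]
      have h2 : ‖ζ ^ (i:ℕ) - ζ ^ (j:ℕ)‖ = 1 := by
        rcases lt_or_gt_of_ne (fun h => hij (Fin.ext h)) with h | h
        · exact hdiff _ _ h (lt_of_lt_of_le j.isLt hnm)
        · rw [norm_sub_rev]
          exact hdiff _ _ h (lt_of_lt_of_le i.isLt hnm)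
      rw [h2, mul_one]
    refine ⟨‖y‖, ⟨z, ?_, ?_⟩, hys⟩
    · intro i
      simp only [Set.mem_setOf_eq, hzdef, add_sub_cancel_left, norm_mul, norm_pow,
        hζnorm, one_pow, mul_one]
      exact hyr
    · have hprod : ∏ i, ∏ j ∈ Finset.univ.erase i, ‖z i - z j‖ = (‖y‖ ^ (n-1)) ^ n := by
        have hinner : ∀ i : Fin n, ∏ j ∈ Finset.univ.erase i, ‖z i - z j‖
            = ‖y‖ ^ (n-1) := by
          intro i
          rw [Finset.prod_congr rfl
            (fun j hj => hzz i j (Ne.symm (Finset.mem_erase.mp hj).1)),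
            Finset.prod_const, Finset.card_erase_of_mem (Finset.mem_univ i),
            Finset.card_univ, Fintype.card_fin]
        rw [Finset.prod_congr rfl (fun i _ => hinner i), Finset.prod_const,
          Finset.card_univ, Fintype.card_fin]
      rw [hprod, aux_rpow ‖y‖ (norm_nonneg y) hn]
  -- conclude
  obtain ⟨x0, hx0S, hx0⟩ := hlt 0 le_rfl hr
  have hlub : IsLUB S r := by
    constructor
    · exact hub
    · intro b hb
      by_contra hbr
      push_neg at hbr
      have hb0 : 0 ≤ b := le_trans hx0.le (hb hx0S)
      obtain ⟨x, hxS, hx⟩ := hlt b hb0 hbr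
      exact absurd (hb hxS) (not_le.2 hx)
  rw [dSeq]
  exact hlub.csSup_eq ⟨x0, hx0S⟩

end Main


/-- In an algebraically closed field complete with respect to a non-trivial
non-archimedean absolute value, the transfinite diameter of the closed disk
`B(a,r)`, `r > 0`, equals `r`. -/
theorem transDiam_closedDisk {K : Type*} [NontriviallyNormedField K]
    [IsAlgClosed K] [CompleteSpace K] (hna : IsNonarchimedean (norm : K → ℝ))
    (a : K) (r : ℝ) (hr : 0 < r) :
    Tendsto (fun n => dSeq {z : K | ‖z - a‖ ≤ r} n) atTop (nhds r) := by
  refine Tendsto.congr' ?_ (tendsto_const_nhds : Tendsto (fun _ : ℕ => r) atTop (nhds r))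
  filter_upwards [eventually_ge_atTop 2] with n hn
  exact (dSeq_disk_eq hna a r hr hn).symm
end

section
/- Suppose a compact set E ⊆ K has the lower capacity density property with constant c ∈ (0,1): for every z ∈ E and every r ∈ (0, diam E), the transfinite diameter of E ∩ B(z,r) is at least c·r. Then every annulus A(a; r, r') = {w : r < |w - a| < r'} that separates E (i.e., A ∩ E = ∅, E meets B(a,r), and E meets {w : |w-a| ≥ r'}) has modulus log(r'/r) ≤ log(1/c). -/
open Filter

/-- The transfinite diameter (capacity) `d(E) = lim_n d_n(E)`, realized as a
limsup (the sequence `d_n(E)` converges). -/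
noncomputable def transDiam {K : Type*} [NormedField K] (E : Set K) : ℝ :=
  Filter.limsup (fun n => dSeq E n) atTop

lemma dSeq_nonneg {K : Type*} [NormedField K] (E : Set K) (n : ℕ) : 0 ≤ dSeq E n := by
  apply Real.sSup_nonneg
  rintro x ⟨z, -, rfl⟩
  exact Real.rpow_nonneg (Finset.prod_nonneg fun i _ =>
    Finset.prod_nonneg fun j _ => norm_nonneg _) _

lemma transDiam_le_of_subset_ball {K : Type*} [NormedField K]
    (hna : IsNonarchimedean (norm : K → ℝ)) (S : Set K) (z : K) (r : ℝ) (hr : 0 ≤ r)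
    (hS : ∀ w ∈ S, ‖w - z‖ ≤ r) : transDiam S ≤ r := by
  apply Filter.limsup_le_of_le (isCoboundedUnder_le_of_le atTop (dSeq_nonneg S))
  filter_upwards [eventually_ge_atTop 2] with n hn
  apply Real.sSup_le _ hr
  rintro x ⟨w, hw, rfl⟩
  have hpair : ∀ i j : Fin n, ‖w i - w j‖ ≤ r := by
    intro i j
    have : w i - w j = (w i - z) + (z - w j) := by ring
    rw [this]
    refine (hna _ _).trans (max_le (hS _ (hw i)) ?_)
    rw [norm_sub_rev]; exact hS _ (hw j)
  have hm : (0:ℝ) < (n : ℝ) * ((n : ℝ) - 1) := by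
    have : (2:ℝ) ≤ (n:ℝ) := by exact_mod_cast hn
    nlinarith
  have hP : (∏ i, ∏ j ∈ Finset.univ.erase i, ‖w i - w j‖) ≤ r ^ (n * (n-1)) := by
    calc (∏ i, ∏ j ∈ Finset.univ.erase i, ‖w i - w j‖)
        ≤ ∏ i : Fin n, ∏ _j ∈ Finset.univ.erase i, r := by
          refine Finset.prod_le_prod (fun i _ => Finset.prod_nonneg fun j _ => norm_nonneg _)
            (fun i _ => Finset.prod_le_prod (fun j _ => norm_nonneg _) (fun j _ => hpair i j))
      _ = r ^ (n * (n-1)) := by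
          simp only [Finset.prod_const, Finset.card_erase_of_mem (Finset.mem_univ _),
            Finset.card_univ, Fintype.card_fin, ← pow_mul]
          ring_nf
  have hPnn : (0:ℝ) ≤ ∏ i, ∏ j ∈ Finset.univ.erase i, ‖w i - w j‖ :=
    Finset.prod_nonneg fun i _ => Finset.prod_nonneg fun j _ => norm_nonneg _
  have hcast : ((n * (n-1) : ℕ) : ℝ) = (n : ℝ) * ((n : ℝ) - 1) := by
    have h1 : 1 ≤ n := by omega
    push_cast [Nat.cast_sub h1]
    ring
  calc (∏ i, ∏ j ∈ Finset.univ.erase i, ‖w i - w j‖) ^ ((1:ℝ) / ((n:ℝ) * ((n:ℝ) - 1)))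
      ≤ (r ^ (n * (n-1))) ^ ((1:ℝ) / ((n:ℝ) * ((n:ℝ) - 1))) :=
        Real.rpow_le_rpow hPnn hP (by positivity)
    _ = r := by
        rw [← Real.rpow_natCast r (n * (n-1)), ← Real.rpow_mul hr, hcast,
          mul_one_div, div_self hm.ne', Real.rpow_one]

/-- If a compact set `E` has the lower capacity density property with constant
`c ∈ (0,1)` — i.e. `d(E ∩ B(z,r)) ≥ c·r` for all `z ∈ E`, `0 < r < diam E` —
then every annulus `A(a; r, r')` separating `E` has modulus
`log (r'/r) ≤ log (1/c)`. -/
theorem lcd_implies_bounded_moduli {K : Type*} [NontriviallyNormedField K]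
    [IsAlgClosed K] [CompleteSpace K] (hna : IsNonarchimedean (norm : K → ℝ))
    (E : Set K) (hE : IsCompact E) (c : ℝ) (hc0 : 0 < c) (hc1 : c < 1)
    (hdens : ∀ z ∈ E, ∀ r : ℝ, 0 < r → r < Metric.diam E →
      c * r ≤ transDiam (E ∩ {w : K | ‖w - z‖ ≤ r})) :
    ∀ (a : K) (r r' : ℝ), 0 < r → r < r' →
      (∀ w : K, r < ‖w - a‖ → ‖w - a‖ < r' → w ∉ E) →
      (∃ z ∈ E, ‖z - a‖ ≤ r) → (∃ z ∈ E, r' ≤ ‖z - a‖) →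
      Real.log (r' / r) ≤ Real.log (1 / c) := by
  rintro a r r' hr hrr' hann ⟨z, hz, hzr⟩ ⟨z', hz', hz'r'⟩
  -- diam E ≥ r'
  have hzz' : r' ≤ ‖z' - z‖ := by
    have h1 : ‖z' - a‖ ≤ max ‖z' - z‖ ‖z - a‖ := by
      have : z' - a = (z' - z) + (z - a) := by ring
      rw [this]; exact hna _ _
    rcases max_cases ‖z' - z‖ ‖z - a‖ with ⟨he, -⟩ | ⟨he, -⟩
    · linarith [hz'r'.trans (h1.trans_eq he)]
    · linarith [hz'r'.trans (h1.trans_eq he)]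
  have hdiam : r' ≤ Metric.diam E := by
    refine hzz'.trans ?_
    have := Metric.dist_le_diam_of_mem hE.isBounded hz' hz
    rwa [dist_eq_norm] at this
  -- main estimate : c * r' ≤ r
  have key : c * r' ≤ r := by
    by_contra h
    push_neg at h
    set ρ := (r / c + r') / 2 with hρdef
    have hrc : r / c < r' := (div_lt_iff₀ hc0).mpr (by linarith [mul_comm c r'])
    have hρ1 : r / c < ρ := by rw [hρdef]; linarith
    have hρ2 : ρ < r' := by rw [hρdef]; linarith
    have hρ0 : 0 < ρ := lt_trans (by positivity) hρ1
    have hrρ : r < ρ := lt_trans (by rw [lt_div_iff₀ hc0]; nlinarith) hρ1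
    have hd := hdens z hz ρ hρ0 (hρ2.trans_le hdiam)
    have hsub : ∀ w ∈ E ∩ {w : K | ‖w - z‖ ≤ ρ}, ‖w - z‖ ≤ r := by
      rintro w ⟨hwE, hwρ⟩
      have hwa : ‖w - a‖ ≤ max ‖w - z‖ ‖z - a‖ := by
        have : w - a = (w - z) + (z - a) := by ring
        rw [this]; exact hna _ _
      have hwa' : ‖w - a‖ < r' :=
        hwa.trans_lt (max_lt (lt_of_le_of_lt hwρ hρ2) (hzr.trans_lt hrr'))
      have hwar : ‖w - a‖ ≤ r := by
        by_contra hwar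
        push_neg at hwar
        exact hann w hwar hwa' hwE
      have : w - z = (w - a) + (a - z) := by ring
      rw [this]
      refine (hna _ _).trans (max_le hwar ?_)
      rw [norm_sub_rev]; exact hzr
    have := hd.trans (transDiam_le_of_subset_ball hna _ z r hr.le hsub)
    have : ρ ≤ r / c := (le_div_iff₀ hc0).mpr (by linarith [mul_comm ρ c])
    linarith
  have h1 : r' / r ≤ 1 / c := by
    rw [div_le_div_iff₀ hr hc0]
    linarith [mul_comm c r']
  exact Real.log_le_log (div_pos (hr.trans hrr') hr) h1
end

section
/- Suppose E ⊆ K is compact and there is a constant M ≥ 0 such that every annulus A(a; r, r') separating E has modulus log(r'/r) ≤ M. Fix s ∈ (0, e^{-M}). Then for every z0 ∈ E and r ∈ (0, diam E), the transfinite diameter of E ∩ B(z0, r) is at least s^2 · r. In particular E has the lower capacity density property with constant c = s^2, for any s < e^{-M}. -/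
open Filter

section NA
variable {K : Type*} [NormedField K]

lemma na_cross (hna : IsNonarchimedean (norm : K → ℝ)) {u z v w : K} {c : ℝ}
    (h1 : ‖u - z‖ < c) (h2 : ‖v - w‖ < c) (h3 : c ≤ ‖z - w‖) : c ≤ ‖u - v‖ := by
  by_contra h
  push_neg at h
  have e : z - w = (z - u) + ((u - v) + (v - w)) := by ring
  have key : ‖z - w‖ ≤ max ‖z - u‖ (max ‖u - v‖ ‖v - w‖) := by
    rw [e]
    exact le_trans (hna _ _) (max_le_max le_rfl (hna _ _))
  rw [norm_sub_rev z u] at key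
  have : max ‖u - z‖ (max ‖u - v‖ ‖v - w‖) < c := by
    exact max_lt h1 (max_lt h h2)
  linarith
  
lemma na_ball (hna : IsNonarchimedean (norm : K → ℝ)) {x w z : K} {a b : ℝ}
    (h1 : ‖x - w‖ < a) (h2 : ‖w - z‖ < b) (hab : a ≤ b) : ‖x - z‖ < b := by
  have e : x - z = (x - w) + (w - z) := by ring
  calc ‖x - z‖ ≤ max ‖x - w‖ ‖w - z‖ := by rw [e]; exact hna _ _
  _ < b := max_lt (lt_of_lt_of_le h1 hab) h2

end NA

section Tree
variable {K : Type*} [NormedField K]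

/-- Combination of the double product over a disjoint union. -/
lemma double_prod_union [DecidableEq K] (T₁ T₂ : Finset K) (hd : Disjoint T₁ T₂) :
    ∏ x ∈ T₁ ∪ T₂, ∏ y ∈ (T₁ ∪ T₂).erase x, ‖x - y‖ =
      ((∏ x ∈ T₁, ∏ y ∈ T₁.erase x, ‖x - y‖) * ∏ x ∈ T₂, ∏ y ∈ T₂.erase x, ‖x - y‖) *
      ((∏ x ∈ T₁, ∏ y ∈ T₂, ‖x - y‖) * ∏ x ∈ T₂, ∏ y ∈ T₁, ‖x - y‖) := by
  rw [Finset.prod_union hd]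
  have h1 : ∀ x ∈ T₁, ∏ y ∈ (T₁ ∪ T₂).erase x, ‖x - y‖
      = (∏ y ∈ T₁.erase x, ‖x - y‖) * ∏ y ∈ T₂, ‖x - y‖ := by
    intro x hx
    have hx2 : x ∉ T₂ := fun h => (Finset.disjoint_left.1 hd hx) h
    rw [Finset.erase_union_distrib, Finset.erase_eq_of_notMem hx2,
      Finset.prod_union (Finset.disjoint_of_subset_left (Finset.erase_subset _ _) hd)]
  have h2 : ∀ x ∈ T₂, ∏ y ∈ (T₁ ∪ T₂).erase x, ‖x - y‖
      = (∏ y ∈ T₂.erase x, ‖x - y‖) * ∏ y ∈ T₁, ‖x - y‖ := by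
    intro x hx
    have hx1 : x ∉ T₁ := fun h => (Finset.disjoint_left.1 hd h) hx
    rw [Finset.erase_union_distrib, Finset.erase_eq_of_notMem hx1,
      Finset.prod_union (Finset.disjoint_of_subset_right (Finset.erase_subset _ _) hd)]
    ring
  rw [Finset.prod_congr rfl h1, Finset.prod_congr rfl h2, Finset.prod_mul_distrib,
    Finset.prod_mul_distrib]
  ring
end Tree

section Tree2
variable {K : Type*} [NormedField K]

lemma tree_exists [DecidableEq K] (hna : IsNonarchimedean (norm : K → ℝ))
    (E : Set K) (t ε : ℝ) (ht0 : 0 < t) (hε0 : 0 < ε) (hεt : ε < t) (hε1 : ε < 1)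
    (step : ∀ z ∈ E, ∀ ρ : ℝ, 0 < ρ → (∃ z' ∈ E, ρ ≤ ‖z' - z‖) →
      ∃ w ∈ E, t * ρ ≤ ‖w - z‖ ∧ ‖w - z‖ < ρ) :
    ∀ k : ℕ, ∀ z ∈ E, ∀ ρ : ℝ, 0 < ρ → (∃ z' ∈ E, ρ ≤ ‖z' - z‖) →
      ∃ T : Finset K, T.card = 2^k ∧ ↑T ⊆ E ∧ (∀ x ∈ T, ‖x - z‖ < ρ) ∧
        (t*ε*ρ) ^ (2^k * 2^k) ≤ (t*ρ) ^ (2^k) * ∏ x ∈ T, ∏ y ∈ T.erase x, ‖x - y‖ := by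
  intro k
  induction k with
  | zero =>
    intro z hz ρ hρ _
    refine ⟨{z}, by simp, by simpa using hz, by simpa using hρ, ?_⟩
    simp only [pow_zero, pow_one, Finset.erase_singleton, Finset.prod_empty,
      Finset.prod_const_one, Finset.prod_singleton, mul_one]
    nlinarith [mul_pos ht0 hρ]
  | succ k IH =>
    intro z hz ρ hρ hfar
    obtain ⟨w, hwE, hw1, hw2⟩ := step z hz ρ hρ hfar
    set N := 2^k with hN
    have hερ : 0 < ε * ρ := by positivity
    have hεtρ : ε * ρ < t * ρ := by nlinarith
    obtain ⟨T₁, hc1, hs1, hb1, hp1⟩ := IH z hz (ε*ρ) hερ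
      ⟨w, hwE, le_trans hεtρ.le hw1⟩
    obtain ⟨T₂, hc2, hs2, hb2, hp2⟩ := IH w hwE (ε*ρ) hερ
      ⟨z, hz, by rw [norm_sub_rev]; exact le_trans hεtρ.le hw1⟩
    -- cross distances
    have hcross : ∀ x ∈ T₁, ∀ y ∈ T₂, t * ρ ≤ ‖x - y‖ := by
      intro x hx y hy
      exact na_cross hna (lt_trans (hb1 x hx) hεtρ) (lt_trans (hb2 y hy) hεtρ)
        (by rw [norm_sub_rev]; exact hw1)
    have hd : Disjoint T₁ T₂ := by
      rw [Finset.disjoint_left]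
      intro x hx1 hx2
      have := hcross x hx1 x hx2
      simp only [sub_self, norm_zero] at this
      nlinarith
    refine ⟨T₁ ∪ T₂, ?_, ?_, ?_, ?_⟩
    · rw [Finset.card_union_of_disjoint hd, hc1, hc2]; ring
    · intro x hx
      rcases Finset.mem_union.1 (by exact_mod_cast hx) with h | h
      · exact hs1 h
      · exact hs2 h
    · intro x hx
      rcases Finset.mem_union.1 hx with h | h
      · exact lt_trans (hb1 x h) (by nlinarith)
      · exact na_ball hna (hb2 x h) hw2 (by nlinarith)
    · -- the product bound
      rw [double_prod_union T₁ T₂ hd]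
      set P1 := ∏ x ∈ T₁, ∏ y ∈ T₁.erase x, ‖x - y‖ with hP1
      set P2 := ∏ x ∈ T₂, ∏ y ∈ T₂.erase x, ‖x - y‖ with hP2
      have hC1 : (t*ρ) ^ (N*N) ≤ ∏ x ∈ T₁, ∏ y ∈ T₂, ‖x - y‖ := by
        calc (t*ρ) ^ (N*N) = ∏ _x ∈ T₁, (t*ρ)^N := by
              rw [Finset.prod_const, hc1, ← pow_mul]
          _ ≤ ∏ x ∈ T₁, ∏ y ∈ T₂, ‖x - y‖ := by
              refine Finset.prod_le_prod (fun _ _ => by positivity) (fun x hx => ?_)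
              calc (t*ρ)^N = ∏ _y ∈ T₂, (t*ρ) := by rw [Finset.prod_const, hc2]
                _ ≤ ∏ y ∈ T₂, ‖x - y‖ :=
                    Finset.prod_le_prod (fun _ _ => by positivity)
                      (fun y hy => hcross x hx y hy)
      have hC2 : (t*ρ) ^ (N*N) ≤ ∏ x ∈ T₂, ∏ y ∈ T₁, ‖x - y‖ := by
        calc (t*ρ) ^ (N*N) = ∏ _x ∈ T₂, (t*ρ)^N := by
              rw [Finset.prod_const, hc2, ← pow_mul]
          _ ≤ ∏ x ∈ T₂, ∏ y ∈ T₁, ‖x - y‖ := by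
              refine Finset.prod_le_prod (fun _ _ => by positivity) (fun x hx => ?_)
              calc (t*ρ)^N = ∏ _y ∈ T₁, (t*ρ) := by rw [Finset.prod_const, hc1]
                _ ≤ ∏ y ∈ T₁, ‖x - y‖ :=
                    Finset.prod_le_prod (fun _ _ => by positivity)
                      (fun y hy => by rw [norm_sub_rev]; exact hcross y hy x hx)
      have hP1n : 0 ≤ P1 := Finset.prod_nonneg fun _ _ => Finset.prod_nonneg fun _ _ => norm_nonneg _
      have hP2n : 0 ≤ P2 := Finset.prod_nonneg fun _ _ => Finset.prod_nonneg fun _ _ => norm_nonneg _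
      have hpos : (0:ℝ) < (t*ε*ρ)^(2*N) := by positivity
      refine le_of_mul_le_mul_left ?_ hpos
      have hpow : (2:ℕ)^(k+1) = 2*N := by rw [pow_succ, hN]; ring
      rw [hpow]
      calc (t*ε*ρ)^(2*N) * (t*ε*ρ)^(2*N*(2*N))
          = ((t*ε*(ε*ρ))^(N*N) * (t*ε*(ε*ρ))^(N*N)) * ((t*ρ)^(N*N) * (t*ρ)^(N*N))
            * (t*ρ)^(2*N) * ε^(2*N) := by ring
        _ ≤ (((t*(ε*ρ))^N * P1) * ((t*(ε*ρ))^N * P2))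
            * ((∏ x ∈ T₁, ∏ y ∈ T₂, ‖x - y‖) * ∏ x ∈ T₂, ∏ y ∈ T₁, ‖x - y‖)
            * (t*ρ)^(2*N) * 1 := by
              have hε2N : ε^(2*N) ≤ 1 := pow_le_one₀ hε0.le hε1.le
              gcongr <;> first
                | exact hp1 | exact hp2 | exact hC1 | exact hC2 | positivity
        _ = (t*ε*ρ)^(2*N) * ((t*ρ)^(2*N) * (P1 * P2 *
            ((∏ x ∈ T₁, ∏ y ∈ T₂, ‖x - y‖) * ∏ x ∈ T₂, ∏ y ∈ T₁, ‖x - y‖))) := by ring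

end Tree2

section Transport
variable {K : Type*} [NormedField K]

lemma double_prod_image [DecidableEq K] (n : ℕ) (z : Fin n → K)
    (hinj : Function.Injective z) (T : Finset K)
    (hT : T = Finset.image z Finset.univ) :
    (∏ i, ∏ j ∈ Finset.univ.erase i, ‖z i - z j‖) = ∏ x ∈ T, ∏ y ∈ T.erase x, ‖x - y‖ := by
  rw [hT, Finset.prod_image (fun i _ j _ hij => hinj hij)]
  refine Finset.prod_congr rfl fun i _ => ?_
  rw [← Finset.image_erase hinj, Finset.prod_image
    (fun a _ b _ hab => hinj hab)]

lemma double_prod_finset_eq [DecidableEq K] (T : Finset K) (n : ℕ) (h : T.card = n) :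
    ∃ z : Fin n → K, (∀ i, z i ∈ T) ∧
      (∏ i, ∏ j ∈ Finset.univ.erase i, ‖z i - z j‖) = ∏ x ∈ T, ∏ y ∈ T.erase x, ‖x - y‖ := by
  have e : Fin n ≃ {x // x ∈ T} := (finCongr h.symm).trans T.equivFin.symm
  refine ⟨fun i => (e i : K), fun i => (e i).2, ?_⟩
  have hinj : Function.Injective (fun i => ((e i : K))) :=
    fun i j hij => e.injective (Subtype.ext hij)
  have hT : T = Finset.image (fun i => ((e i : K))) Finset.univ := by
    ext x
    simp only [Finset.mem_image, Finset.mem_univ, true_and]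
    constructor
    · intro hx
      exact ⟨e.symm ⟨x, hx⟩, by simp⟩
    · rintro ⟨i, rfl⟩
      exact (e i).2
  exact double_prod_image n _ hinj T hT

lemma dSeq_elt_le (E' : Set K) (z0 : K) (r : ℝ) (hr : 0 < r)
    (hE' : ∀ x ∈ E', ‖x - z0‖ ≤ r) (n : ℕ) :
    ∀ x ∈ {x : ℝ | ∃ z : Fin n → K, (∀ i, z i ∈ E') ∧
      x = (∏ i, ∏ j ∈ Finset.univ.erase i, ‖z i - z j‖) ^
        ((1 : ℝ) / ((n : ℝ) * ((n : ℝ) - 1)))}, x ≤ max 1 (2*r) := by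
  rintro x ⟨z, hzE, rfl⟩
  set M0 := max 1 (2*r) with hM0
  have hM1 : (1:ℝ) ≤ M0 := le_max_left _ _
  have hM0nn : (0:ℝ) ≤ M0 := le_trans zero_le_one hM1
  rcases Nat.lt_or_ge n 2 with hn | hn
  · interval_cases n <;> norm_num <;> linarith
  · have hnR : (2:ℝ) ≤ (n:ℝ) := by exact_mod_cast hn
    have hd0 : 0 < (n:ℝ) * ((n:ℝ) - 1) := by nlinarith
    have hbound : ∀ i j : Fin n, ‖z i - z j‖ ≤ M0 := by
      intro i j
      have e : z i - z j = (z i - z0) - (z j - z0) := by ring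
      calc ‖z i - z j‖ ≤ ‖z i - z0‖ + ‖z j - z0‖ := by rw [e]; exact norm_sub_le _ _
        _ ≤ r + r := add_le_add (hE' _ (hzE i)) (hE' _ (hzE j))
        _ ≤ M0 := by rw [hM0]; rw [two_mul] at *; exact le_max_right _ _ |>.trans_eq rfl
    have hprodle : (∏ i, ∏ j ∈ Finset.univ.erase i, ‖z i - z j‖) ≤ M0 ^ (n * (n-1)) := by
      calc (∏ i, ∏ j ∈ Finset.univ.erase i, ‖z i - z j‖)
          ≤ ∏ _i : Fin n, M0 ^ (n-1) := by
            refine Finset.prod_le_prod (fun _ _ => Finset.prod_nonneg fun _ _ => norm_nonneg _)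
              (fun i _ => ?_)
            calc ∏ j ∈ Finset.univ.erase i, ‖z i - z j‖ ≤ ∏ _j ∈ Finset.univ.erase i, M0 :=
                  Finset.prod_le_prod (fun _ _ => norm_nonneg _) (fun j _ => hbound i j)
              _ = M0 ^ (n-1) := by
                  rw [Finset.prod_const, Finset.card_erase_of_mem (Finset.mem_univ i),
                    Finset.card_univ, Fintype.card_fin]
        _ = M0 ^ (n * (n-1)) := by rw [Finset.prod_const, Finset.card_univ, Fintype.card_fin,
              ← pow_mul, Nat.mul_comm]
    have hprodnn : (0:ℝ) ≤ ∏ i, ∏ j ∈ Finset.univ.erase i, ‖z i - z j‖ :=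
      Finset.prod_nonneg fun _ _ => Finset.prod_nonneg fun _ _ => norm_nonneg _
    have hc0 : 0 ≤ (1:ℝ) / ((n:ℝ) * ((n:ℝ) - 1)) := by positivity
    calc (∏ i, ∏ j ∈ Finset.univ.erase i, ‖z i - z j‖) ^ ((1:ℝ) / ((n:ℝ) * ((n:ℝ) - 1)))
        ≤ (M0 ^ (n * (n-1))) ^ ((1:ℝ) / ((n:ℝ) * ((n:ℝ) - 1))) :=
          Real.rpow_le_rpow hprodnn hprodle hc0
      _ = M0 := by
          rw [← Real.rpow_natCast M0 (n * (n-1)), ← Real.rpow_mul hM0nn]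
          have : ((n * (n-1) : ℕ) : ℝ) * ((1:ℝ) / ((n:ℝ) * ((n:ℝ) - 1))) = 1 := by
            have h1 : ((n * (n-1) : ℕ) : ℝ) = (n:ℝ) * ((n:ℝ) - 1) := by
              push_cast [Nat.cast_sub (by omega : 1 ≤ n)]
              ring
            rw [h1]
            field_simp
            exact div_self (ne_of_gt (by linarith))
          rw [this, Real.rpow_one]

end Transport


/-- Non-archimedean Pommerenke theorem, forward direction: if every annulus
separating the compact set `E` has modulus at most `M`, then for every
`s ∈ (0, e^{-M})`, every `z0 ∈ E`, and every `r ∈ (0, diam E)`, one has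
`d(E ∩ B(z0,r)) ≥ s² · r`; i.e. `E` has the lower capacity density property
with constant `c = s²`. -/
theorem bounded_moduli_implies_lcd {K : Type*} [NontriviallyNormedField K]
    [IsAlgClosed K] [CompleteSpace K] (hna : IsNonarchimedean (norm : K → ℝ))
    (E : Set K) (hE : IsCompact E) (M : ℝ) (hM : 0 ≤ M)
    (hmod : ∀ (a : K) (r r' : ℝ), 0 < r → r < r' →
      (∀ w : K, r < ‖w - a‖ → ‖w - a‖ < r' → w ∉ E) →
      (∃ z ∈ E, ‖z - a‖ ≤ r) → (∃ z ∈ E, r' ≤ ‖z - a‖) →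
      Real.log (r' / r) ≤ M)
    (s : ℝ) (hs0 : 0 < s) (hsM : s < Real.exp (-M)) :
    ∀ z0 ∈ E, ∀ r : ℝ, 0 < r → r < Metric.diam E →
      s ^ 2 * r ≤ transDiam (E ∩ {w : K | ‖w - z0‖ ≤ r}) := by
    classical
  intro z0 hz0 r hr0 hrd
  set E' : Set K := E ∩ {w : K | ‖w - z0‖ ≤ r} with hE'def
  -- choose t and ε (opaque)
  have hexp1 : Real.exp (-M) ≤ 1 := Real.exp_le_one_iff.2 (neg_nonpos.2 hM)
  obtain ⟨t, hst, htexp⟩ : ∃ t : ℝ, s < t ∧ t < Real.exp (-M) :=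
    ⟨(s + Real.exp (-M)) / 2, by linarith, by linarith⟩
  have ht0 : 0 < t := lt_trans hs0 hst
  have ht1 : t < 1 := lt_of_lt_of_le htexp hexp1
  obtain ⟨ε, hεdef⟩ : ∃ ε : ℝ, ε = s^2 / t := ⟨_, rfl⟩
  have hε0 : 0 < ε := by rw [hεdef]; positivity
  have hεs : ε < s := by rw [hεdef, div_lt_iff₀ ht0]; nlinarith
  have hεt : ε < t := lt_trans hεs hst
  have hε1 : ε < 1 := lt_trans hεt ht1
  have htε : t * ε = s^2 := by rw [hεdef]; field_simp
  -- the annulus step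
  have hstep : ∀ z ∈ E, ∀ ρ : ℝ, 0 < ρ → (∃ z' ∈ E, ρ ≤ ‖z' - z‖) →
      ∃ w ∈ E, t * ρ ≤ ‖w - z‖ ∧ ‖w - z‖ < ρ := by
    intro z hz ρ hρ hfar
    by_contra hcon
    push_neg at hcon
    have hann : ∀ w : K, t*ρ < ‖w - z‖ → ‖w - z‖ < ρ → w ∉ E := by
      intro w h1 h2 hw
      exact absurd (hcon w hw h1.le) (not_le.2 h2)
    have hlog := hmod z (t*ρ) ρ (by positivity) (by nlinarith) hann
      ⟨z, hz, by rw [sub_self, norm_zero]; positivity⟩ hfar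
    have hq : ρ / (t*ρ) = 1/t := by
      rw [mul_comm, ← div_div, div_self (ne_of_gt hρ)]
    rw [hq, one_div, Real.log_inv] at hlog
    have : Real.log t < -M := (Real.log_lt_iff_lt_exp ht0).2 htexp
    linarith
  -- far point at scale r
  have hfar0 : ∃ z' ∈ E, r ≤ ‖z' - z0‖ := by
    by_contra h
    push_neg at h
    have : Metric.diam E ≤ r := by
      refine Metric.diam_le_of_forall_dist_le hr0.le (fun x hx y hy => ?_)
      have e : x - y = (x - z0) + (z0 - y) := by ring
      rw [dist_eq_norm]
      calc ‖x - y‖ ≤ max ‖x - z0‖ ‖z0 - y‖ := by rw [e]; exact hna _ _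
        _ ≤ r := max_le (h x hx).le (by rw [norm_sub_rev]; exact (h y hy).le)
    linarith
  -- element bound for dSeq sets
  have hE'sub : ∀ x ∈ E', ‖x - z0‖ ≤ r := fun x hx => hx.2
  have hbdd : ∀ n : ℕ, ∀ x ∈ {x : ℝ | ∃ z : Fin n → K, (∀ i, z i ∈ E') ∧
      x = (∏ i, ∏ j ∈ Finset.univ.erase i, ‖z i - z j‖) ^
        ((1 : ℝ) / ((n : ℝ) * ((n : ℝ) - 1)))}, x ≤ max 1 (2*r) :=
    fun n => dSeq_elt_le E' z0 r hr0 hE'sub n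
  have hM0nn : (0:ℝ) ≤ max 1 (2*r) := le_trans zero_le_one (le_max_left _ _)
  have hdSeq_le : ∀ n, dSeq E' n ≤ max 1 (2*r) :=
    fun n => Real.sSup_le (hbdd n) hM0nn
  -- the key estimate at n = 2^k
  have key : ∀ k : ℕ, 1 ≤ k →
      t * r * ε ^ (((2:ℝ)^k) / (((2:ℝ)^k) - 1)) ≤ dSeq E' (2^k) := by
    intro k hk
    obtain ⟨T, hcard, hsub, hball, hprod⟩ :=
      tree_exists hna E t ε ht0 hε0 hεt hε1 hstep k z0 hz0 r hr0 hfar0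
    obtain ⟨z, hzT, hzeq⟩ := double_prod_finset_eq T (2^k) hcard
    have hNcast : (((2^k : ℕ) : ℝ)) = (2:ℝ)^k := by push_cast; ring
    rw [← hNcast]
    have hN2 : 2 ≤ 2^k := by
      calc 2 = 2^1 := by norm_num
        _ ≤ 2^k := Nat.pow_le_pow_right (by norm_num) hk
    have hNR : (2:ℝ) ≤ ((2^k : ℕ):ℝ) := by exact_mod_cast hN2
    have hNN : 2^k ≤ 2^k * 2^k := Nat.le_mul_of_pos_left _ (by positivity)
    obtain ⟨a, hadef⟩ : ∃ a : ℕ, a = 2^k * 2^k - 2^k := ⟨_, rfl⟩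
    have hm : a + 2^k = 2^k * 2^k := by rw [hadef]; exact Nat.sub_add_cancel hNN
    have htrpos : (0:ℝ) < (t*r)^(2^k) := by positivity
    have hAP : t^a * ε^(2^k * 2^k) * r^a ≤
        ∏ x ∈ T, ∏ y ∈ T.erase x, ‖x - y‖ := by
      refine le_of_mul_le_mul_left ?_ htrpos
      calc (t*r)^(2^k) * (t^a * ε^(2^k * 2^k) * r^a)
          = (t*ε*r)^(2^k * 2^k) := by rw [← hm]; ring
        _ ≤ (t*r)^(2^k) * ∏ x ∈ T, ∏ y ∈ T.erase x, ‖x - y‖ := hprod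
    have hzE' : ∀ i, z i ∈ E' := fun i =>
      ⟨hsub (Finset.mem_coe.2 (hzT i)), le_of_lt (hball _ (hzT i))⟩
    have hle : (∏ x ∈ T, ∏ y ∈ T.erase x, ‖x - y‖) ^
        ((1 : ℝ) / ((((2^k : ℕ)) : ℝ) * ((((2^k : ℕ)) : ℝ) - 1))) ≤ dSeq E' (2^k) :=
      le_csSup ⟨max 1 (2*r), fun x hx => hbdd (2^k) x hx⟩
        ⟨z, hzE', congrArg (· ^ ((1 : ℝ) / ((((2^k : ℕ)) : ℝ) * ((((2^k : ℕ)) : ℝ) - 1)))) hzeq.symm⟩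
    refine le_trans ?_ hle
    have hden1 : (0:ℝ) < ((2^k : ℕ):ℝ) * (((2^k : ℕ):ℝ) - 1) := by nlinarith
    have hden0 : ((2^k : ℕ):ℝ) * (((2^k : ℕ):ℝ) - 1) ≠ 0 := ne_of_gt hden1
    have hc0 : (0:ℝ) ≤ (1 : ℝ) / ((((2^k : ℕ)) : ℝ) * ((((2^k : ℕ)) : ℝ) - 1)) :=
      le_of_lt (by rw [one_div]; exact inv_pos.2 hden1)
    have hA0 : (0:ℝ) ≤ t^a * ε^(2^k * 2^k) * r^a := by positivity
    refine le_trans (le_of_eq ?_)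
      (Real.rpow_le_rpow hA0 hAP hc0)
    have hcast1 : ((a : ℕ) : ℝ) = ((2^k:ℕ):ℝ) * (((2^k:ℕ):ℝ) - 1) := by
      rw [hadef, Nat.cast_sub hNN]
      push_cast
      ring
    have hcast2 : ((2^k * 2^k : ℕ) : ℝ) = ((2^k:ℕ):ℝ) * ((2^k:ℕ):ℝ) := by push_cast; ring
    rw [Real.mul_rpow (by positivity) (by positivity),
      Real.mul_rpow (by positivity) (by positivity),
      ← Real.rpow_natCast t a, ← Real.rpow_natCast ε (2^k * 2^k),
      ← Real.rpow_natCast r a,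
      ← Real.rpow_mul ht0.le, ← Real.rpow_mul hε0.le, ← Real.rpow_mul hr0.le,
      hcast1, hcast2]
    have h1' : ((2^k:ℕ):ℝ) ≠ 0 := ne_of_gt (by linarith)
    have h2' : ((2^k:ℕ):ℝ) - 1 ≠ 0 := ne_of_gt (by linarith)
    have e1 : (((2^k:ℕ):ℝ) * (((2^k:ℕ):ℝ) - 1)) *
        ((1 : ℝ) / ((((2^k : ℕ)) : ℝ) * ((((2^k : ℕ)) : ℝ) - 1))) = 1 := by
      rw [mul_one_div, div_self hden0]
    have e2 : (((2^k:ℕ):ℝ) * ((2^k:ℕ):ℝ)) *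
        ((1 : ℝ) / ((((2^k : ℕ)) : ℝ) * ((((2^k : ℕ)) : ℝ) - 1))) =
        ((2^k:ℕ):ℝ) / (((2^k:ℕ):ℝ) - 1) := by
      rw [mul_one_div, mul_div_mul_left _ _ h1']
    rw [e1, e2, Real.rpow_one, Real.rpow_one]
    ring
  -- monotonicity of the lower bounds
  have hmono : ∀ k j : ℕ, 1 ≤ k → k ≤ j →
      t * r * ε ^ (((2:ℝ)^k) / (((2:ℝ)^k) - 1)) ≤
      t * r * ε ^ (((2:ℝ)^j) / (((2:ℝ)^j) - 1)) := by
    intro k j hk hkj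
    have h2k : (2:ℝ) ≤ (2:ℝ)^k := by
      calc (2:ℝ) = 2^1 := by norm_num
        _ ≤ 2^k := pow_le_pow_right₀ one_le_two hk
    have h2j : (2:ℝ) ≤ (2:ℝ)^j := by
      calc (2:ℝ) = 2^1 := by norm_num
        _ ≤ 2^j := pow_le_pow_right₀ one_le_two (le_trans hk hkj)
    have hkj' : (2:ℝ)^k ≤ (2:ℝ)^j := pow_le_pow_right₀ one_le_two hkj
    have hexp_le : ((2:ℝ)^j) / (((2:ℝ)^j) - 1) ≤ ((2:ℝ)^k) / (((2:ℝ)^k) - 1) := by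
      rw [div_le_div_iff₀ (by linarith) (by linarith)]
      nlinarith
    have := Real.rpow_le_rpow_of_exponent_ge hε0 hε1.le hexp_le
    nlinarith [mul_pos ht0 hr0]
  -- frequently bound
  have hfreq : ∀ k : ℕ, 1 ≤ k →
      ∃ᶠ n in atTop, t * r * ε ^ (((2:ℝ)^k) / (((2:ℝ)^k) - 1)) ≤ dSeq E' n := by
    intro k hk
    rw [Filter.frequently_atTop]
    intro m
    refine ⟨2^(max k m), ?_, ?_⟩
    · calc m ≤ 2^m := Nat.le_of_lt (Nat.lt_two_pow_self (n := m))
        _ ≤ 2^(max k m) := Nat.pow_le_pow_right (by norm_num) (le_max_right _ _)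
    · exact le_trans (hmono k (max k m) hk (le_max_left _ _)) (key _ (le_trans hk (le_max_left _ _)))
  have hbddU : Filter.IsBoundedUnder (· ≤ ·) atTop (fun n => dSeq E' n) :=
    Filter.isBoundedUnder_of ⟨max 1 (2*r), fun n => hdSeq_le n⟩
  have hlimsup : ∀ k : ℕ, 1 ≤ k →
      t * r * ε ^ (((2:ℝ)^k) / (((2:ℝ)^k) - 1)) ≤ transDiam E' := fun k hk =>
    Filter.le_limsup_of_frequently_le (hfreq k hk) hbddU
  -- limit
  have h2atTop : Tendsto (fun k : ℕ => (2:ℝ)^k) atTop atTop :=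
    tendsto_pow_atTop_atTop_of_one_lt (by norm_num)
  have h3 : Tendsto (fun k : ℕ => (2:ℝ)^k - 1) atTop atTop :=
    tendsto_atTop_add_const_right atTop (-1) h2atTop
  have h4 : Tendsto (fun k : ℕ => ((2:ℝ)^k - 1)⁻¹) atTop (nhds 0) :=
    h3.inv_tendsto_atTop
  have h5 : Tendsto (fun k : ℕ => 1 + ((2:ℝ)^k - 1)⁻¹) atTop (nhds 1) := by
    simpa using h4.const_add (1:ℝ)
  have he : Tendsto (fun k : ℕ => ((2:ℝ)^k) / (((2:ℝ)^k) - 1)) atTop (nhds 1) := by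
    refine h5.congr' ?_
    filter_upwards [h3.eventually_gt_atTop 0] with k hk2
    have hne : (2:ℝ)^k - 1 ≠ 0 := ne_of_gt hk2
    field_simp
    ring
  have hεlim : Tendsto (fun k : ℕ => ε ^ (((2:ℝ)^k) / (((2:ℝ)^k) - 1))) atTop
      (nhds ε) := by
    have h6 := Filter.Tendsto.rpow
      (tendsto_const_nhds : Tendsto (fun _ : ℕ => ε) atTop (nhds ε)) he
      (Or.inl (ne_of_gt hε0))
    rw [Real.rpow_one] at h6
    exact h6
  have hfinal : Tendsto (fun k : ℕ => t * r * ε ^ (((2:ℝ)^k) / (((2:ℝ)^k) - 1))) atTop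
      (nhds (t * r * ε)) := hεlim.const_mul (t*r)
  have : t * r * ε ≤ transDiam E' :=
    le_of_tendsto hfinal (Filter.eventually_atTop.2 ⟨1, fun k hk => hlimsup k hk⟩)
  have heq : t * r * ε = s^2 * r := by rw [← htε]; ring
  linarith
end

section
/- Let E ⊆ K be compact with the property that for some s ∈ (0,1) and every z ∈ E and t ∈ (0, diam E), the set E ∩ {w : s·t ≤ |w - z| ≤ t} is non-empty. Fix z0 ∈ E and r ∈ (0, diam E). Then for every j ≥ 0 there exist 2^j points of E ∩ B(z0, r), indexed by binary strings (i_1,…,i_j) ∈ {0,1}^j, such that any two points indexed by strings first differing at position m+1 (after agreeing on the first m coordinates) are at distance > s^{m+1}·r from each other. -/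
/-- Pommerenke's binary tree of well-separated points: if a compact set `E` in
a non-archimedean field satisfies, for some `s ∈ (0,1)`, that
`E ∩ {w : s·t ≤ |w - z| ≤ t}` is non-empty for every `z ∈ E` and every
`t ∈ (0, diam E)`, then for every `z0 ∈ E`, `r ∈ (0, diam E)`, and `j ≥ 0`
there exist `2^j` points of `E ∩ B(z0,r)`, indexed by binary strings of length
`j`, such that two points whose indexing strings agree on the first `m`
coordinates and differ at the `(m+1)`-st are at distance `> s^(m+1)·r`. -/
theorem pommerenke_binary_tree {K : Type*} [NontriviallyNormedField K]
    (hna : IsNonarchimedean (norm : K → ℝ)) (E : Set K) (hE : IsCompact E)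
    (s : ℝ) (hs0 : 0 < s) (hs1 : s < 1)
    (hstep : ∀ z ∈ E, ∀ t : ℝ, 0 < t → t < Metric.diam E →
      ∃ w ∈ E, s * t ≤ ‖w - z‖ ∧ ‖w - z‖ ≤ t)
    (z0 : K) (hz0 : z0 ∈ E) (r : ℝ) (hr0 : 0 < r) (hr1 : r < Metric.diam E) :
    ∀ j : ℕ, ∃ a : (Fin j → Bool) → K,
      (∀ σ, a σ ∈ E ∧ ‖a σ - z0‖ ≤ r) ∧
      ∀ σ τ : Fin j → Bool, ∀ m : Fin j,
        (∀ k : Fin j, (k : ℕ) < (m : ℕ) → σ k = τ k) → σ m ≠ τ m →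
        s ^ ((m : ℕ) + 1) * r < ‖a σ - a τ‖ := by
  -- Key lemma: strict version of the annulus property
  have key : ∀ z ∈ E, ∀ ρ : ℝ, 0 < ρ → ρ < Metric.diam E →
      ∃ w ∈ E, s * ρ < ‖w - z‖ ∧ ‖w - z‖ ≤ ρ := by
    intro z hz ρ hρ0 hρd
    by_contra hcon
    push_neg at hcon
    set δ := Metric.diam E - ρ with hδ
    have hδ0 : 0 < δ := by simp only [hδ]; linarith
    have hsteps : ∀ n : ℕ, ∃ w ∈ E, ρ < ‖w - z‖ ∧ ‖w - z‖ ≤ ρ + δ / (n + 2) := by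
      intro n
      have h2 : (0:ℝ) < (n:ℝ) + 2 := by positivity
      have ht0 : 0 < ρ + δ / ((n:ℝ) + 2) := by positivity
      have ht1 : ρ + δ / ((n:ℝ) + 2) < Metric.diam E := by
        have hlt : δ / ((n:ℝ)+2) < δ := div_lt_self hδ0 (by linarith)
        have : Metric.diam E = ρ + δ := by simp [hδ]
        linarith
      obtain ⟨w, hwE, hw1, hw2⟩ := hstep z hz _ ht0 ht1
      refine ⟨w, hwE, ?_, hw2⟩
      have hdp : 0 < δ / ((n:ℝ)+2) := div_pos hδ0 h2
      have hsρ : s * ρ < s * (ρ + δ/((n:ℝ)+2)) := by nlinarith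
      exact hcon w hwE (lt_of_lt_of_le hsρ hw1)
    choose w hwE hw1 hw2 using hsteps
    obtain ⟨w0, hw0E, φ, hφ, hlim⟩ := hE.tendsto_subseq hwE
    have hnorm : Filter.Tendsto (fun n => ‖w (φ n) - z‖) Filter.atTop (nhds ‖w0 - z‖) :=
      (hlim.sub tendsto_const_nhds).norm
    have hge : ρ ≤ ‖w0 - z‖ :=
      ge_of_tendsto hnorm (Filter.Eventually.of_forall fun n => (hw1 (φ n)).le)
    have hdenlim : Filter.Tendsto (fun n : ℕ => ρ + δ / ((n:ℝ) + 2)) Filter.atTop (nhds ρ) := by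
      have h0 : Filter.Tendsto (fun n : ℕ => δ / ((n:ℝ)+2)) Filter.atTop (nhds 0) := by
        apply Filter.Tendsto.div_atTop tendsto_const_nhds
        exact Filter.tendsto_atTop_add_const_right _ 2 tendsto_natCast_atTop_atTop
      simpa using tendsto_const_nhds.add h0
    have hle : ‖w0 - z‖ ≤ ρ := by
      refine le_of_tendsto_of_tendsto' hnorm hdenlim fun n => ?_
      refine (hw2 (φ n)).trans ?_
      have hmono : ((n:ℝ)+2) ≤ ((φ n : ℕ):ℝ) + 2 := by
        have : n ≤ φ n := hφ.le_apply
        exact by exact_mod_cast add_le_add_left (Nat.cast_le.mpr this) 2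
      gcongr
    have heq : ‖w0 - z‖ = ρ := le_antisymm hle hge
    have hsρρ : s * ρ < ρ := by nlinarith
    have := hcon w0 hw0E (by rw [heq]; exact hsρρ)
    rw [heq] at this
    exact lt_irrefl ρ this
  -- Main induction
  have main : ∀ j : ℕ, ∀ z, z ∈ E → ∀ ρ : ℝ, 0 < ρ → ρ < Metric.diam E →
      ∃ a : (Fin j → Bool) → K,
        (∀ σ, a σ ∈ E ∧ ‖a σ - z‖ ≤ ρ) ∧
        ∀ σ τ : Fin j → Bool, ∀ m : Fin j,
          (∀ k : Fin j, (k : ℕ) < (m : ℕ) → σ k = τ k) → σ m ≠ τ m →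
          s ^ ((m : ℕ) + 1) * ρ < ‖a σ - a τ‖ := by
    intro j
    induction j with
    | zero =>
      intro z hz ρ hρ0 _
      exact ⟨fun _ => z, fun σ => ⟨hz, by simp [hρ0.le]⟩, fun σ τ m => m.elim0⟩
    | succ j ih =>
      intro z hz ρ hρ0 hρd
      obtain ⟨w, hwE, hw1, hw2⟩ := key z hz ρ hρ0 hρd
      have hsρ0 : 0 < s * ρ := mul_pos hs0 hρ0
      have hsρρ : s * ρ < ρ := by nlinarith
      have hsρd : s * ρ < Metric.diam E := lt_trans hsρρ hρd
      obtain ⟨a0, h0, sep0⟩ := ih z hz (s*ρ) hsρ0 hsρd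
      obtain ⟨a1, h1, sep1⟩ := ih w hwE (s*ρ) hsρ0 hsρd
      refine ⟨fun σ => if σ 0 then a1 (Fin.tail σ) else a0 (Fin.tail σ), ?_, ?_⟩
      · intro σ
        by_cases hσ : σ 0 = true
        · simp only [hσ, if_true]
          refine ⟨(h1 (Fin.tail σ)).1, ?_⟩
          have hultra := hna (a1 (Fin.tail σ) - w) (w - z)
          rw [sub_add_sub_cancel] at hultra
          exact hultra.trans (max_le ((h1 (Fin.tail σ)).2.trans hsρρ.le) hw2)
        · simp only [Bool.not_eq_true] at hσ
          simp only [hσ, Bool.false_eq_true, if_false]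
          exact ⟨(h0 (Fin.tail σ)).1, (h0 (Fin.tail σ)).2.trans hsρρ.le⟩
      · intro σ τ m hagree hdiff
        have sep01 : ∀ x y : K, ‖x - z‖ ≤ s*ρ → ‖y - w‖ ≤ s*ρ → s*ρ < ‖x - y‖ := by
          intro x y hx hy
          by_contra hxy
          push_neg at hxy
          have e : w - z = (w - y) + ((y - x) + (x - z)) := by ring
          have c1 : ‖(y - x) + (x - z)‖ ≤ max ‖y - x‖ ‖x - z‖ := hna _ _
          have c2 : ‖w - z‖ ≤ max ‖w - y‖ ‖(y - x) + (x - z)‖ := by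
            rw [e]; exact hna _ _
          have r1 : ‖w - y‖ = ‖y - w‖ := norm_sub_rev _ _
          have r2 : ‖y - x‖ = ‖x - y‖ := norm_sub_rev _ _
          have : ‖w - z‖ ≤ s * ρ := by
            refine c2.trans (max_le (by rw [r1]; exact hy) (c1.trans (max_le ?_ hx)))
            rw [r2]; exact hxy
          linarith
        rcases Fin.eq_zero_or_eq_succ m with h0m | ⟨k, hk⟩
        · subst h0m
          simp only [Fin.val_zero, zero_add, pow_one]
          have hστ : σ 0 ≠ τ 0 := hdiff
          by_cases hσ : σ 0 = true
          · have hτ : τ 0 = false := by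
              cases hτ0 : τ 0 with
              | false => rfl
              | true => exact absurd (hσ.trans hτ0.symm) hστ
            simp only [hσ, hτ, if_true, Bool.false_eq_true, if_false]
            have := sep01 (a0 (Fin.tail τ)) (a1 (Fin.tail σ))
              (h0 (Fin.tail τ)).2 (h1 (Fin.tail σ)).2
            rw [norm_sub_rev] at this
            exact this
          · simp only [Bool.not_eq_true] at hσ
            have hτ : τ 0 = true := by
              cases hτ0 : τ 0 with
              | true => rfl
              | false => exact absurd (hσ.trans hτ0.symm) hστ
            simp only [hσ, hτ, if_true, Bool.false_eq_true, if_false]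
            exact sep01 (a0 (Fin.tail σ)) (a1 (Fin.tail τ))
              (h0 (Fin.tail σ)).2 (h1 (Fin.tail τ)).2
        · subst hk
          have hσ0 : σ 0 = τ 0 := hagree 0 (by simp)
          have ht : ∀ k' : Fin j, (k' : ℕ) < (k : ℕ) →
              Fin.tail σ k' = Fin.tail τ k' := by
            intro k' hk'
            exact hagree k'.succ (by simpa [Fin.val_succ] using Nat.succ_lt_succ hk')
          have hd : Fin.tail σ k ≠ Fin.tail τ k := hdiff
          have hpow : s ^ ((k.succ : Fin (j+1)).1 + 1) * ρ = s ^ ((k : ℕ) + 1) * (s * ρ) := by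
            simp only [Fin.val_succ]; ring
          rw [hpow]
          by_cases hσ : σ 0 = true
          · have hτ : τ 0 = true := hσ0 ▸ hσ
            simp only [hσ, hτ, if_true]
            exact sep1 (Fin.tail σ) (Fin.tail τ) k ht hd
          · simp only [Bool.not_eq_true] at hσ
            have hτ : τ 0 = false := hσ0 ▸ hσ
            simp only [hσ, hτ, Bool.false_eq_true, if_false]
            exact sep0 (Fin.tail σ) (Fin.tail τ) k ht hd
  intro j
  exact main j z0 hz0 r hr0 hr1
end

section
/- Let s ∈ (0,1), r > 0, and suppose for each j ∈ ℕ and each binary string of length j we have points a_{i_1,…,i_j} in a metric space with ultrametric distance d, satisfying: whenever two strings of length j agree on exactly the first m coordinates (0 ≤ m ≤ j-1) the corresponding points satisfy d > s^{m+1} r. Then for each string (i_1,…,i_j), the product over all other strings (i'_1,…,i'_j) of the pairwise distances d(a_{i_1,…,i_j}, a_{i'_1,…,i'_j}) exceeds ∏_{m=0}^{j-1} (s^{m+1} r)^{2^{j-m-1}}, and consequently the transfinite diameter of the set {a_{i_1,…,i_j}} of 2^j points is at least (s^{∑_{m=0}^{∞} (m+1) 2^{-(m+1)}}) r = s^2 r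 as j → ∞. -/
open Filter

private lemma pommerenke_sumB (n : ℕ) :
    ∑ m ∈ Finset.range n, 2 ^ (n - m - 1) = 2 ^ n - 1 := by
  induction n with
  | zero => simp
  | succ k ih =>
    have e : ∀ i ∈ Finset.range k, 2 ^ (k + 1 - (i + 1) - 1) = 2 ^ (k - i - 1) :=
      fun i _ => by congr 1; omega
    rw [Finset.sum_range_succ', Finset.sum_congr rfl e, ih]
    have h1 : 1 ≤ 2 ^ k := Nat.one_le_two_pow
    have h2 : 2 ^ (k + 1) = 2 * 2 ^ k := by ring
    have h3 : k + 1 - 0 - 1 = k := by omega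
    rw [h3]
    omega

private lemma pommerenke_sumA (n : ℕ) :
    (∑ m ∈ Finset.range n, (m + 1) * 2 ^ (n - m - 1)) + n + 2 = 2 ^ (n + 1) := by
  induction n with
  | zero => simp
  | succ k ih =>
    have e : ∀ m ∈ Finset.range k,
        (m + 1) * 2 ^ (k + 1 - m - 1) = 2 * ((m + 1) * 2 ^ (k - m - 1)) := by
      intro m hm
      have hm' := Finset.mem_range.mp hm
      have : k + 1 - m - 1 = (k - m - 1) + 1 := by omega
      rw [this, pow_succ]; ring
    rw [Finset.sum_range_succ, Finset.sum_congr rfl e, ← Finset.mul_sum]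
    have h2 : 2 ^ (k + 1 + 1) = 2 * 2 ^ (k + 1) := by ring
    have h3 : k + 1 - k - 1 = 0 := by omega
    rw [h3, pow_zero, mul_one]
    omega

/-- Abstract counting lemma behind Pommerenke's argument: in an ultrametric
space, given `2^j` points indexed by binary strings of length `j ≥ 1` such
that points whose strings agree on exactly the first `m` coordinates are at
distance `> s^(m+1)·r`, the product over all other strings of the pairwise
distances from any fixed point exceeds `∏_{m<j} (s^(m+1) r)^(2^(j-m-1))`; and
the resulting lower bound for the transfinite diameter of the configuration,
`(∏_{m<j} (s^(m+1) r)^(2^(j-m-1)))^(1/(2^j - 1))`, tends to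
`s^(∑_{m} (m+1)/2^(m+1)) · r = s² r` as `j → ∞`. -/
theorem pommerenke_counting_lemma {X : Type*} [MetricSpace X]
    (hultra : ∀ x y z : X, dist x z ≤ max (dist x y) (dist y z))
    (s r : ℝ) (hs0 : 0 < s) (hs1 : s < 1) (hr : 0 < r)
    (j : ℕ) (hj : 1 ≤ j) (a : (Fin j → Bool) → X)
    (hsep : ∀ σ τ : Fin j → Bool, ∀ m : Fin j,
      (∀ k : Fin j, (k : ℕ) < (m : ℕ) → σ k = τ k) → σ m ≠ τ m →
      s ^ ((m : ℕ) + 1) * r < dist (a σ) (a τ)) :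
    (∀ σ : Fin j → Bool,
      ∏ m ∈ Finset.range j, (s ^ (m + 1) * r) ^ (2 ^ (j - m - 1)) <
        ∏ τ ∈ Finset.univ.erase σ, dist (a σ) (a τ)) ∧
    Tendsto (fun n : ℕ =>
        (∏ m ∈ Finset.range n, (s ^ (m + 1) * r) ^ (2 ^ (n - m - 1))) ^
          ((1 : ℝ) / ((2 : ℝ) ^ n - 1)))
      atTop (nhds (s ^ 2 * r)) := by
  constructor
  · -- Part 1: counting argument
    intro σ
    classical
    set S : (Fin j → Bool) → Finset (Fin j) :=
      fun τ => Finset.univ.filter (fun k => σ k ≠ τ k) with hS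
    have hmemS : ∀ (τ : Fin j → Bool) (k : Fin j), k ∈ S τ ↔ σ k ≠ τ k := by
      intro τ k
      rw [hS]
      exact ⟨fun h => (Finset.mem_filter.mp h).2,
        fun h => Finset.mem_filter.mpr ⟨Finset.mem_univ _, h⟩⟩
    have hne : ∀ τ : Fin j → Bool, τ ≠ σ → (S τ).Nonempty := by
      intro τ h
      rcases Function.ne_iff.mp h with ⟨k, hk⟩
      exact ⟨k, (hmemS τ k).mpr (Ne.symm hk)⟩
    set g : (Fin j → Bool) → Fin j :=
      fun τ => if h : (S τ).Nonempty then (S τ).min' h else ⟨0, hj⟩ with hg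
    -- characterization of the fibers
    have hchar : ∀ (τ : Fin j → Bool) (m : Fin j),
        (τ ∈ (Finset.univ.erase σ).filter (fun τ => g τ = m)) ↔
          ((∀ k : Fin j, (k : ℕ) < (m : ℕ) → σ k = τ k) ∧ σ m ≠ τ m) := by
      intro τ m
      constructor
      · intro h
        rw [Finset.mem_filter, Finset.mem_erase] at h
        obtain ⟨⟨hτσ, -⟩, hgm⟩ := h
        have hSne := hne τ hτσ
        have hgdef : g τ = (S τ).min' hSne := dif_pos hSne
        have hmem : g τ ∈ S τ := hgdef ▸ (S τ).min'_mem hSne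
        refine ⟨?_, ?_⟩
        · intro k hk
          by_contra hkk
          have hkS : k ∈ S τ := (hmemS τ k).mpr hkk
          have := hgdef ▸ (S τ).min'_le k hkS
          rw [hgm] at this
          exact absurd this (by rw [Fin.le_def]; omega)
        · have := hmem
          rw [hgm] at this
          exact (hmemS τ m).mp this
      · rintro ⟨hagree, hdiff⟩
        have hτσ : τ ≠ σ := fun h => hdiff (by rw [h])
        have hSne := hne τ hτσ
        have hgdef : g τ = (S τ).min' hSne := dif_pos hSne
        have hmS : m ∈ S τ := (hmemS τ m).mpr hdiff
        have hle : g τ ≤ m := hgdef ▸ (S τ).min'_le m hmS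
        have hmem : g τ ∈ S τ := hgdef ▸ (S τ).min'_mem hSne
        have hgeq : g τ = m := by
          rcases lt_or_eq_of_le hle with hlt | heq
          · exfalso
            exact ((hmemS τ (g τ)).mp hmem)
              (hagree (g τ) (Fin.lt_def.mp hlt))
          · exact heq
        rw [Finset.mem_filter, Finset.mem_erase]
        exact ⟨⟨hτσ, Finset.mem_univ _⟩, hgeq⟩
    -- fiber cardinality
    have hcard : ∀ m : Fin j,
        ((Finset.univ.erase σ).filter (fun τ => g τ = m)).card
          = 2 ^ (j - (m : ℕ) - 1) := by
      intro m
      have hm := m.isLt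
      have hcardt : (2 : ℕ) ^ (j - (m : ℕ) - 1)
          = (Finset.univ : Finset (Fin (j - (m : ℕ) - 1) → Bool)).card := by
        simp
      rw [hcardt]
      refine Finset.card_bij'
        (i := fun τ _ => fun i : Fin (j - (m : ℕ) - 1) =>
          τ ⟨(m : ℕ) + 1 + (i : ℕ), by omega⟩)
        (j := fun b _ => fun k : Fin j =>
          if h1 : (k : ℕ) < (m : ℕ) then σ k
          else if h2 : (k : ℕ) = (m : ℕ) then !(σ k)
          else b ⟨(k : ℕ) - (m : ℕ) - 1, by omega⟩)
        (fun τ hτ => Finset.mem_univ _) ?_ ?_ ?_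
      · -- inverse map lands in the fiber
        intro b _
        refine (hchar _ m).mpr ⟨?_, ?_⟩
        · intro k hk
          beta_reduce
          rw [dif_pos hk]
        · beta_reduce
          rw [dif_neg (lt_irrefl ((m : ℕ))), dif_pos rfl]
          cases σ m <;> simp
      · -- left inverse
        intro τ hτ
        obtain ⟨hagree, hdiff⟩ := (hchar τ m).mp hτ
        funext k
        beta_reduce
        by_cases h1 : (k : ℕ) < (m : ℕ)
        · rw [dif_pos h1]; exact hagree k h1
        · by_cases h2 : (k : ℕ) = (m : ℕ)
          · rw [dif_neg h1, dif_pos h2]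
            have hk : k = m := Fin.ext h2
            subst hk
            revert hdiff
            cases σ k <;> cases τ k <;> simp
          · rw [dif_neg h1, dif_neg h2]
            exact congrArg τ (Fin.ext (by
              show (m : ℕ) + 1 + ((k : ℕ) - (m : ℕ) - 1) = (k : ℕ)
              omega))
      · -- right inverse
        intro b _
        funext i
        beta_reduce
        rw [dif_neg (by omega : ¬((m : ℕ) + 1 + (i : ℕ) < (m : ℕ))),
          dif_neg (by omega : ¬((m : ℕ) + 1 + (i : ℕ) = (m : ℕ)))]
        exact congrArg b (Fin.ext (by
          show (m : ℕ) + 1 + (i : ℕ) - (m : ℕ) - 1 = (i : ℕ)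
          omega))
    -- put things together
    calc ∏ m ∈ Finset.range j, (s ^ (m + 1) * r) ^ (2 ^ (j - m - 1))
        = ∏ m : Fin j, (s ^ ((m : ℕ) + 1) * r) ^ (2 ^ (j - (m : ℕ) - 1)) :=
          (Fin.prod_univ_eq_prod_range _ j).symm
      _ < ∏ m : Fin j,
            ∏ τ ∈ (Finset.univ.erase σ).filter (fun τ => g τ = m),
              dist (a σ) (a τ) := by
          apply Finset.prod_lt_prod_of_nonempty
          · intro m _
            positivity
          · intro m _
            have hconst : (s ^ ((m : ℕ) + 1) * r) ^ (2 ^ (j - (m : ℕ) - 1))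
                = ∏ _τ ∈ (Finset.univ.erase σ).filter (fun τ => g τ = m),
                    (s ^ ((m : ℕ) + 1) * r) := by
              rw [Finset.prod_const, hcard m]
            rw [hconst]
            apply Finset.prod_lt_prod_of_nonempty
            · intro τ _; positivity
            · intro τ hτ
              obtain ⟨hagree, hdiff⟩ := (hchar τ m).mp hτ
              exact hsep σ τ m hagree hdiff
            · rw [← Finset.card_pos, hcard m]
              positivity
          · exact ⟨⟨0, hj⟩, Finset.mem_univ _⟩
      _ = ∏ τ ∈ Finset.univ.erase σ, dist (a σ) (a τ) :=
          Finset.prod_fiberwise_of_maps_to (fun τ _ => Finset.mem_univ _) _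
  · -- Part 2: the limit
    have hfun : ∀ n : ℕ, 1 ≤ n →
        (∏ m ∈ Finset.range n, (s ^ (m + 1) * r) ^ (2 ^ (n - m - 1))) ^
          ((1 : ℝ) / ((2 : ℝ) ^ n - 1))
        = s ^ ((((∑ m ∈ Finset.range n, (m + 1) * 2 ^ (n - m - 1) : ℕ)) : ℝ)
            / ((2 : ℝ) ^ n - 1)) * r := by
      intro n hn
      have hpos2 : (0 : ℝ) < (2 : ℝ) ^ n - 1 := by
        have : (1 : ℝ) < 2 ^ n := one_lt_pow₀ (by norm_num) (by omega)
        linarith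
      have hprod : ∏ m ∈ Finset.range n, (s ^ (m + 1) * r) ^ (2 ^ (n - m - 1))
          = s ^ (∑ m ∈ Finset.range n, (m + 1) * 2 ^ (n - m - 1))
            * r ^ ((2 : ℕ) ^ n - 1) := by
        rw [← pommerenke_sumB n, ← Finset.prod_pow_eq_pow_sum,
          ← Finset.prod_pow_eq_pow_sum, ← Finset.prod_mul_distrib]
        exact Finset.prod_congr rfl fun m _ => by rw [mul_pow, pow_mul]
      have hcast : (((2 : ℕ) ^ n - 1 : ℕ) : ℝ) = (2 : ℝ) ^ n - 1 := by
        rw [Nat.cast_sub Nat.one_le_two_pow]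
        push_cast
        ring
      rw [hprod, Real.mul_rpow (by positivity) (by positivity),
        ← Real.rpow_natCast s, ← Real.rpow_natCast r,
        ← Real.rpow_mul hs0.le, ← Real.rpow_mul hr.le,
        mul_one_div, hcast, mul_one_div, div_self hpos2.ne', Real.rpow_one]
    -- the exponent tends to 2
    have hzero : Tendsto (fun n : ℕ => (n : ℝ) / ((2 : ℝ) ^ n - 1)) atTop (nhds 0) := by
      have hupper : Tendsto (fun n : ℕ => 2 * ((n : ℝ) * (1 / 2 : ℝ) ^ n)) atTop (nhds 0) := by
        have := (tendsto_self_mul_const_pow_of_lt_one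
          (r := (1 / 2 : ℝ)) (by norm_num) (by norm_num)).const_mul 2
        simpa using this
      refine tendsto_of_tendsto_of_tendsto_of_le_of_le' tendsto_const_nhds hupper ?_ ?_
      · filter_upwards [eventually_ge_atTop 1] with n hn
        have h1 : (1 : ℝ) < 2 ^ n := one_lt_pow₀ (by norm_num) (by omega)
        exact div_nonneg (Nat.cast_nonneg n) (by linarith)
      · filter_upwards [eventually_ge_atTop 1] with n hn
        have h2n : (2 : ℝ) ≤ 2 ^ n := by
          calc (2 : ℝ) = 2 ^ 1 := (pow_one 2).symm
          _ ≤ 2 ^ n := pow_le_pow_right₀ (by norm_num) hn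
        have hn1 : (1 : ℝ) ≤ (n : ℝ) := by exact_mod_cast hn
        have hpos2 : (0 : ℝ) < (2 : ℝ) ^ n - 1 := by linarith
        have h2npos : (0 : ℝ) < 2 ^ n := by positivity
        have hrhs : 2 * ((n : ℝ) * (1 / 2 : ℝ) ^ n) = (2 * (n : ℝ)) / (2 ^ n) := by
          rw [div_pow, one_pow]; ring
        rw [hrhs, div_le_div_iff₀ hpos2 h2npos]
        nlinarith [mul_nonneg (by linarith : (0:ℝ) ≤ 2 ^ n - 2)
          (by linarith : (0:ℝ) ≤ (n : ℝ))]
    have hexp : Tendsto (fun n : ℕ =>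
        (((∑ m ∈ Finset.range n, (m + 1) * 2 ^ (n - m - 1) : ℕ)) : ℝ)
          / ((2 : ℝ) ^ n - 1)) atTop (nhds 2) := by
      have heq : ∀ᶠ n : ℕ in atTop,
          (((∑ m ∈ Finset.range n, (m + 1) * 2 ^ (n - m - 1) : ℕ)) : ℝ)
            / ((2 : ℝ) ^ n - 1) = 2 - (n : ℝ) / ((2 : ℝ) ^ n - 1) := by
        filter_upwards [eventually_ge_atTop 1] with n hn
        have h2n : (1 : ℝ) < 2 ^ n := one_lt_pow₀ (by norm_num) (by omega)
        have hpos2 : (0 : ℝ) < (2 : ℝ) ^ n - 1 := by linarith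
        have hA := pommerenke_sumA n
        have hAc : (((∑ m ∈ Finset.range n, (m + 1) * 2 ^ (n - m - 1) : ℕ)) : ℝ)
            = 2 * ((2 : ℝ) ^ n - 1) - n := by
          have : ((∑ m ∈ Finset.range n, (m + 1) * 2 ^ (n - m - 1) : ℕ) : ℝ)
              + n + 2 = 2 ^ (n + 1) := by exact_mod_cast congrArg (Nat.cast : ℕ → ℝ) hA
          have h2 : (2 : ℝ) ^ (n + 1) = 2 * 2 ^ n := by ring
          linarith
        rw [hAc]
        field_simp
      have h2 : Tendsto (fun n : ℕ => 2 - (n : ℝ) / ((2 : ℝ) ^ n - 1))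
          atTop (nhds (2 - 0)) := tendsto_const_nhds.sub hzero
      rw [sub_zero] at h2
      exact Filter.Tendsto.congr' (Filter.EventuallyEq.symm heq) h2
    have hlim : Tendsto (fun n : ℕ =>
        s ^ ((((∑ m ∈ Finset.range n, (m + 1) * 2 ^ (n - m - 1) : ℕ)) : ℝ)
          / ((2 : ℝ) ^ n - 1)) * r) atTop (nhds (s ^ (2 : ℝ) * r)) :=
      (Filter.Tendsto.rpow tendsto_const_nhds hexp (Or.inl hs0.ne')).mul_const r
    have hfinal : s ^ (2 : ℝ) = s ^ (2 : ℕ) := by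
      rw [← Real.rpow_natCast s 2]; norm_num
    rw [hfinal] at hlim
    refine Tendsto.congr' ?_ hlim
    filter_upwards [eventually_ge_atTop 1] with n hn
    exact (hfun n hn).symm
end
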